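/- Let C_cap = {x ∈ ℝ³ : ‖x‖ = 1, xᵀ e_z ≥ c_z} with c_z = cos(θ_max) ∈ (0,1]. For a nonzero vector g ∈ ℝ³ with unit normalization ĝ = g/‖g‖, the maximizer of ⟨g, x⟩ over x ∈ C_cap is: ĝ itself if ĝᵀ e_z ≥ c_z; otherwise, if the horizontal component v = (ĝ − (ĝᵀe_z) e_z)/‖ĝ − (ĝᵀe_z) e_z‖ is well-defined, the boundary point √(1−c_z²)·v + c_z·e_z. -/

import Mathlib

open scoped RealInnerProductSpace

lemma sqrt_mul_le_sqrt_mul (a t s u : ℝ) (ha : 0 ≤ a) (hat : a ≤ t)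
    (hs : s^2 = 1 - a^2) (hu : u^2 = 1 - t^2) (hs0 : 0 ≤ s) (hu0 : 0 ≤ u) :
    a * u ≤ t * s := by
  have h2 : (a*u)^2 ≤ (t*s)^2 := by nlinarith
  calc a*u = Real.sqrt ((a*u)^2) := (Real.sqrt_sq (mul_nonneg ha hu0)).symm
    _ ≤ Real.sqrt ((t*s)^2) := Real.sqrt_le_sqrt h2
    _ = t*s := Real.sqrt_sq (mul_nonneg (le_trans ha hat) hs0)

lemma key_ineq (a t cz : ℝ) (ha1 : -1 ≤ a) (hac : a ≤ cz) (hcz0 : 0 < cz)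
    (hct : cz ≤ t) (ht1 : t ≤ 1) :
    a*t + Real.sqrt (1-a^2) * Real.sqrt (1-t^2) ≤
    a*cz + Real.sqrt (1-a^2) * Real.sqrt (1-cz^2) := by
  set s := Real.sqrt (1-a^2) with hsdef
  set u := Real.sqrt (1-t^2) with hudef
  set c := Real.sqrt (1-cz^2) with hcdef
  have hs0 : 0 ≤ s := Real.sqrt_nonneg _
  have hu0 : 0 ≤ u := Real.sqrt_nonneg _
  have hc0 : 0 ≤ c := Real.sqrt_nonneg _
  have hs2 : s^2 = 1-a^2 := Real.sq_sqrt (by nlinarith)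
  have hu2 : u^2 = 1-t^2 := Real.sq_sqrt (by nlinarith)
  have hc2 : c^2 = 1-cz^2 := Real.sq_sqrt (by nlinarith)
  have h1 : a*u ≤ t*s := by
    rcases le_or_gt a 0 with h|h
    · have h3 : 0 ≤ t*s := mul_nonneg (by linarith) hs0
      nlinarith [mul_nonpos_of_nonpos_of_nonneg h hu0]
    · exact sqrt_mul_le_sqrt_mul a t s u h.le (by linarith) hs2 hu2 hs0 hu0
  have h2 : a*c ≤ cz*s := by
    rcases le_or_gt a 0 with h|h
    · have h3 : 0 ≤ cz*s := mul_nonneg hcz0.le hs0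
      nlinarith [mul_nonpos_of_nonpos_of_nonneg h hc0]
    · exact sqrt_mul_le_sqrt_mul a cz s c h.le hac hs2 hc2 hs0 hc0
  rcases eq_or_lt_of_le (add_nonneg hc0 hu0) with hcu|hcu
  · -- c + u = 0, so c = u = 0, cz = 1 = t
    have hc' : c = 0 := by linarith
    have hu' : u = 0 := by linarith
    have hcz1 : cz = 1 := by nlinarith
    have ht : t = 1 := by linarith
    rw [hc', hu', hcz1, ht]
  · have hmid : a*(c+u) ≤ s*(cz+t) := by nlinarith
    have hprod := mul_le_mul_of_nonneg_left hmid (sub_nonneg.mpr hct)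
    have key : (a*(t-cz))*(c+u) ≤ (s*(c-u))*(c+u) := by nlinarith
    have key' : a*(t-cz) ≤ s*(c-u) := le_of_mul_le_mul_right key hcu
    nlinarith [key']

/-- Frank–Wolfe linear oracle on the spherical cap (Eq. (36)): the closed-form
point maximizes `⟨g, x⟩` over `C_cap = {x : ‖x‖ = 1, xᵀe_z ≥ c_z}`. -/
theorem stmt_5 (θmax : ℝ) (hθ : θmax ∈ Set.Ico 0 (Real.pi / 2))
    (cz : ℝ) (hcz : cz = Real.cos θmax)
    (ez : EuclideanSpace ℝ (Fin 3)) (hez : ez = WithLp.toLp 2 (fun i => if i = 2 then 1 else 0))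
    (g : EuclideanSpace ℝ (Fin 3)) (hg : g ≠ 0)
    (ghat : EuclideanSpace ℝ (Fin 3)) (hghat : ghat = ‖g‖⁻¹ • g) :
    ((cz ≤ ⟪ghat, ez⟫ →
        ∀ x : EuclideanSpace ℝ (Fin 3), ‖x‖ = 1 → cz ≤ ⟪x, ez⟫ → ⟪g, x⟫ ≤ ⟪g, ghat⟫) ∧
     (⟪ghat, ez⟫ < cz → ∀ v : EuclideanSpace ℝ (Fin 3),
        ghat - ⟪ghat, ez⟫ • ez ≠ 0 →
        v = ‖ghat - ⟪ghat, ez⟫ • ez‖⁻¹ • (ghat - ⟪ghat, ez⟫ • ez) →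
        ∀ x : EuclideanSpace ℝ (Fin 3), ‖x‖ = 1 → cz ≤ ⟪x, ez⟫ →
          ⟪g, x⟫ ≤ ⟪g, Real.sqrt (1 - cz^2) • v + cz • ez⟫)) := by
  have hgn : (0:ℝ) < ‖g‖ := norm_pos_iff.mpr hg
  have hgn' : ‖g‖ ≠ 0 := ne_of_gt hgn
  have hghat_norm : ‖ghat‖ = 1 := by
    rw [hghat, norm_smul, norm_inv, norm_norm, inv_mul_cancel₀ hgn']
  have hgeq : g = ‖g‖ • ghat := by
    rw [hghat, smul_smul, mul_inv_cancel₀ hgn', one_smul]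
  have hez_norm : ‖ez‖ = 1 := by
    have : ez = EuclideanSpace.single (2 : Fin 3) (1:ℝ) := by
      rw [hez]; ext i
      simp [EuclideanSpace.single, Pi.single_apply]
    rw [this, EuclideanSpace.norm_single, norm_one]
  have hcz0 : 0 < cz := by
    rw [hcz]
    apply Real.cos_pos_of_mem_Ioo
    constructor
    · linarith [hθ.1, Real.pi_pos]
    · exact hθ.2
  have hcz1 : cz ≤ 1 := by rw [hcz]; exact Real.cos_le_one _
  constructor
  · intro _ x hx _
    have h1 : ⟪g, x⟫ ≤ ‖g‖ * ‖x‖ := real_inner_le_norm g x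
    have h2 : ⟪g, ghat⟫ = ‖g‖ := by
      rw [hghat, real_inner_smul_right, real_inner_self_eq_norm_sq]
      field_simp
    rw [h2, hx] at *
    linarith
  · intro ha v hwne hv x hx hxe
    set a := ⟪ghat, ez⟫ with hadef
    set t := ⟪x, ez⟫ with htdef
    set w := ghat - a • ez with hwdef
    set p := x - t • ez with hpdef
    have hwa : ⟪ghat, w⟫ = 1 - a^2 := by
      rw [hwdef, inner_sub_right, real_inner_smul_right, real_inner_self_eq_norm_sq,
        hghat_norm]
      ring
    have hw2 : ‖w‖^2 = 1 - a^2 := by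
      rw [hwdef, @norm_sub_sq_real, real_inner_smul_right, norm_smul, hghat_norm, hez_norm,
        Real.norm_eq_abs, ← hadef]
      rw [mul_one, sq_abs]
      ring
    have hp2 : ‖p‖^2 = 1 - t^2 := by
      rw [hpdef, @norm_sub_sq_real, real_inner_smul_right, norm_smul, hx, hez_norm,
        Real.norm_eq_abs, ← htdef]
      rw [mul_one, sq_abs]
      ring
    have ha1 : -1 ≤ a := by
      have := abs_real_inner_le_norm ghat ez
      rw [hghat_norm, hez_norm] at this
      have := abs_le.mp (by linarith [this] : |a| ≤ 1)
      linarith [this.1]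
    have ht1 : t ≤ 1 := by
      have := abs_real_inner_le_norm x ez
      rw [hx, hez_norm] at this
      have := abs_le.mp (by linarith [this] : |t| ≤ 1)
      linarith [this.2]
    have hwnorm : ‖w‖ = Real.sqrt (1 - a^2) := by
      rw [← hw2, Real.sqrt_sq (norm_nonneg _)]
    have hpnorm : ‖p‖ = Real.sqrt (1 - t^2) := by
      rw [← hp2, Real.sqrt_sq (norm_nonneg _)]
    -- inner ghat x decomposition
    have hdecomp : ⟪ghat, x⟫ = ⟪w, p⟫ + a * t := by
      rw [hwdef, hpdef]
      simp only [inner_sub_left, inner_sub_right, real_inner_smul_left,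
        real_inner_smul_right, real_inner_self_eq_norm_sq, hez_norm]
      have e1 : ⟪ez, x⟫ = t := by rw [real_inner_comm, htdef]
      rw [e1, ← hadef]
      ring
    have hCS : ⟪w, p⟫ ≤ Real.sqrt (1 - a^2) * Real.sqrt (1 - t^2) := by
      rw [← hwnorm, ← hpnorm]
      exact real_inner_le_norm w p
    -- target value
    have hghatv : ⟪ghat, v⟫ = Real.sqrt (1 - a^2) := by
      have hwn0 : ‖w‖ ≠ 0 := norm_ne_zero_iff.mpr hwne
      rw [hv, real_inner_smul_right, hwa, ← hw2, Real.sqrt_sq (norm_nonneg _)]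
      field_simp
    have htarget : ⟪ghat, Real.sqrt (1 - cz^2) • v + cz • ez⟫
        = Real.sqrt (1 - a^2) * Real.sqrt (1 - cz^2) + a * cz := by
      rw [inner_add_right, real_inner_smul_right, real_inner_smul_right, hghatv, ← hadef]
      ring
    have hkey := key_ineq a t cz ha1 ha.le hcz0 hxe ht1
    have hgx : ⟪g, x⟫ = ‖g‖ * ⟪ghat, x⟫ := by
      conv_lhs => rw [hgeq]
      rw [real_inner_smul_left]
    have hgy : ⟪g, Real.sqrt (1 - cz^2) • v + cz • ez⟫
        = ‖g‖ * (Real.sqrt (1 - a^2) * Real.sqrt (1 - cz^2) + a * cz) := by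
      conv_lhs => rw [hgeq]
      rw [real_inner_smul_left, htarget]
    rw [hgx, hgy, hdecomp]
    have hfin : ⟪w, p⟫ + a * t ≤ Real.sqrt (1 - a^2) * Real.sqrt (1 - cz^2) + a * cz := by
      linarith [hCS, hkey]
    exact mul_le_mul_of_nonneg_left hfin (norm_nonneg g)
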